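/- (Arcidiacono–Miller Lemma 1 under Type-I extreme value.) Let D be a finite nonempty set, v : D → ℝ, let μ be the standard Gumbel measure on ℝ, and define V = ∫ max_{d ∈ D} (v(d) + ε(d)) d(⊗_{d∈D} μ)(ε) and p(d) = exp(v(d)) / Σ_{d' ∈ D} exp(v(d')). Then for every d ∈ D, V = (γ − log p(d)) + v(d); that is, the difference between the integrated value and the choice-specific value v(d) equals ψ_d(p) = γ − log p(d), a function of the conditional choice probabilities alone. -/

import Mathlib

open MeasureTheory

section AuxGumbel
open Set Real Filter Asymptotics

lemma gum_le_exp (x : ℝ) : Real.exp (-x - Real.exp (-x)) ≤ Real.exp x := by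
  rw [Real.exp_le_exp]
  have h : Real.exp (-x) = Real.exp (-x/2) * Real.exp (-x/2) := by
    rw [← Real.exp_add]; ring_nf
  nlinarith [Real.add_one_le_exp (-x/2), Real.exp_pos (-x/2), sq_nonneg (Real.exp (-x/2) + x/2 - 1), sq_nonneg (x/2 + 1)]

lemma gum_cont : Continuous fun x : ℝ => Real.exp (-x - Real.exp (-x)) := by
  continuity

lemma gum_integrable : Integrable (fun x : ℝ => Real.exp (-x - Real.exp (-x))) := by
  rw [← integrableOn_univ, ← Set.Iic_union_Ioi (a := (0:ℝ)), integrableOn_union]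
  constructor
  · refine Integrable.mono (integrableOn_exp_Iic 0) ?_ ?_
    · exact (gum_cont.aestronglyMeasurable).restrict
    · filter_upwards with x
      rw [Real.norm_eq_abs, Real.norm_eq_abs, abs_of_pos (Real.exp_pos _),
        abs_of_pos (Real.exp_pos _)]
      exact gum_le_exp x
  · refine Integrable.mono (exp_neg_integrableOn_Ioi 0 (one_pos)) ?_ ?_
    · exact (gum_cont.aestronglyMeasurable).restrict
    · filter_upwards with x
      rw [Real.norm_eq_abs, Real.norm_eq_abs, abs_of_pos (Real.exp_pos _),
        abs_of_pos (Real.exp_pos _), Real.exp_le_exp]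
      have := Real.exp_pos (-x); nlinarith

lemma gum_hasDerivAt (x : ℝ) :
    HasDerivAt (fun y : ℝ => Real.exp (-Real.exp (-y))) (Real.exp (-x - Real.exp (-x))) x := by
  have h1 : HasDerivAt (fun y : ℝ => -Real.exp (-y)) (Real.exp (-x)) x := by
    have := ((Real.hasDerivAt_exp (-x)).comp x (hasDerivAt_neg x)).neg
    exact this.congr_deriv (by simp)
  have := (Real.hasDerivAt_exp (-Real.exp (-x))).comp x h1
  exact this.congr_deriv (by rw [← Real.exp_add]; ring_nf)

lemma gum_integral_Iic (a : ℝ) :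
    ∫ x in Iic a, Real.exp (-x - Real.exp (-x)) = Real.exp (-Real.exp (-a)) := by
  have h := integral_Iic_of_hasDerivAt_of_tendsto' (a := a) (m := 0)
    (fun x _ => gum_hasDerivAt x) (gum_integrable.integrableOn) ?_
  · rw [h, sub_zero]
  · have h1 : Tendsto (fun y : ℝ => -Real.exp (-y)) atBot atBot := by
      exact tendsto_neg_atTop_atBot.comp (Real.tendsto_exp_atTop.comp tendsto_neg_atBot_atTop)
    exact Real.tendsto_exp_atBot.comp h1


lemma mellin_log_exp_convergent :
    MellinConvergent (fun t : ℝ => Real.log t • (Real.exp (-t) : ℂ)) 1 := by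
  refine (mellin_hasDerivAt_of_isBigO_rpow (E := ℂ) (a := (1:ℝ) + 1) (b := 0)
    (f := fun t => (Real.exp (-t) : ℂ)) (s := 1) ?_ ?_ (by norm_num) ?_ (by norm_num)).1
  · refine (Continuous.continuousOn ?_).locallyIntegrableOn measurableSet_Ioi
    exact Complex.continuous_ofReal.comp (Real.continuous_exp.comp continuous_neg)
  · rw [← isBigO_norm_left]
    simp_rw [Complex.norm_real, isBigO_norm_left]
    simpa only [neg_one_mul] using (isLittleO_exp_neg_mul_rpow_atTop zero_lt_one _).isBigO
  · simp_rw [neg_zero, Real.rpow_zero]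
    refine isBigO_const_of_tendsto (?_ : Filter.Tendsto _ _ (nhds (1 : ℂ))) one_ne_zero
    rw [(by simp : (1 : ℂ) = Real.exp (-0))]
    exact (Complex.continuous_ofReal.comp
      (Real.continuous_exp.comp continuous_neg)).continuousWithinAt

lemma log_mul_exp_integrableOn :
    IntegrableOn (fun t : ℝ => Real.log t * Real.exp (-t)) (Ioi 0) := by
  have h := mellin_log_exp_convergent
  rw [MellinConvergent] at h
  have h2 : IntegrableOn (fun t : ℝ => ((Real.log t * Real.exp (-t) : ℝ) : ℂ)) (Ioi 0) := by
    refine h.congr_fun ?_ measurableSet_Ioi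
    intro t ht
    simp only [sub_self, Complex.cpow_zero, one_smul, Complex.real_smul]
    push_cast
    ring
  have h3 := h2.re
  refine h3.congr ?_
  filter_upwards with t
  show RCLike.re ((Real.log t * Real.exp (-t) : ℝ) : ℂ) = _
  exact RCLike.ofReal_re _

lemma integral_log_mul_exp :
    ∫ t in Ioi 0, Real.log t * Real.exp (-t) = -Real.eulerMascheroniConstant := by
  have hC : HasDerivAt Complex.GammaIntegral
      (∫ t : ℝ in Ioi 0, (t : ℂ) ^ ((1:ℂ) - 1) * (Real.log t * Real.exp (-t))) 1 :=
    Complex.hasDerivAt_GammaIntegral (by norm_num)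
  have heq : (∫ t : ℝ in Ioi 0, (t : ℂ) ^ ((1:ℂ) - 1) * (Real.log t * Real.exp (-t)))
      = ((∫ t : ℝ in Ioi 0, Real.log t * Real.exp (-t) : ℝ) : ℂ) := by
    have h1 : (∫ t : ℝ in Ioi 0, (t : ℂ) ^ ((1:ℂ) - 1) * (Real.log t * Real.exp (-t)))
        = ∫ t : ℝ in Ioi 0, ((Real.log t * Real.exp (-t) : ℝ) : ℂ) := by
      refine setIntegral_congr_fun measurableSet_Ioi fun t ht => ?_
      simp only [sub_self, Complex.cpow_zero, one_mul]
      push_cast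
      ring
    rw [h1]
    exact integral_ofReal
  rw [heq] at hC
  have hre : HasDerivAt (fun x : ℝ => (Complex.GammaIntegral x).re)
      (∫ t in Ioi 0, Real.log t * Real.exp (-t)) 1 := by
    simpa using hC.real_of_complex
  have hG : HasDerivAt Real.Gamma
      (∫ t in Ioi 0, Real.log t * Real.exp (-t)) 1 := by
    refine hre.congr_of_eventuallyEq ?_
    filter_upwards [eventually_gt_nhds one_pos] with x hx
    rw [← Complex.Gamma_eq_integral (by simpa using hx), Complex.Gamma_ofReal,
      Complex.ofReal_re]
  exact hG.unique Real.hasDerivAt_Gamma_one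



lemma gum_subst (c : ℝ) (g : ℝ → ℝ) :
    ∫ x, g x = ∫ t in Ioi 0, |(-(t⁻¹))| • g (c - Real.log t) := by
  have himg : (fun t : ℝ => c - Real.log t) '' (Ioi 0) = univ := by
    refine eq_univ_of_forall fun x => ?_
    exact ⟨Real.exp (c - x), Real.exp_pos _, by simp [Real.log_exp]⟩
  have hderiv : ∀ t ∈ Ioi (0:ℝ),
      HasDerivWithinAt (fun t : ℝ => c - Real.log t) (-(t⁻¹)) (Ioi 0) t :=
    fun t ht => ((Real.hasDerivAt_log (ne_of_gt ht)).const_sub c).hasDerivWithinAt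
  have hinj : InjOn (fun t : ℝ => c - Real.log t) (Ioi 0) := by
    intro a ha b hb hab
    have : Real.log a = Real.log b := by dsimp at hab; linarith
    exact Real.log_injOn_pos ha hb this
  have := integral_image_eq_integral_abs_deriv_smul measurableSet_Ioi hderiv hinj g
  rw [himg] at this
  simpa using this

lemma gum_shift_moment (c : ℝ) :
    ∫ x, x * Real.exp (-(x - c) - Real.exp (-(x - c)))
      = c + Real.eulerMascheroniConstant := by
  rw [gum_subst c (fun x => x * Real.exp (-(x - c) - Real.exp (-(x - c))))]
  have heq : ∀ t ∈ Ioi (0:ℝ),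
      |(-(t⁻¹))| • ((c - Real.log t) *
        Real.exp (-((c - Real.log t) - c) - Real.exp (-((c - Real.log t) - c))))
      = (c - Real.log t) * Real.exp (-t) := by
    intro t ht
    have ht' : (0:ℝ) < t := ht
    rw [abs_neg, abs_of_pos (inv_pos.mpr ht'), smul_eq_mul]
    have h1 : -((c - Real.log t) - c) = Real.log t := by ring
    rw [h1, Real.exp_sub, Real.exp_log ht', Real.exp_neg]
    have := Real.exp_pos t
    field_simp
  rw [setIntegral_congr_fun measurableSet_Ioi heq]
  have hsplit : ∀ t : ℝ, (c - Real.log t) * Real.exp (-t)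
      = c * Real.exp (-t) - Real.log t * Real.exp (-t) := fun t => by ring
  simp_rw [hsplit]
  have hexp : IntegrableOn (fun t : ℝ => Real.exp (-t)) (Ioi 0) := by
    simpa using exp_neg_integrableOn_Ioi 0 one_pos
  rw [integral_sub (hexp.const_mul c) log_mul_exp_integrableOn,
    integral_const_mul, integral_exp_neg_Ioi_zero, integral_log_mul_exp]
  ring

lemma gum_shift_total (c : ℝ) :
    ∫ x, Real.exp (-(x - c) - Real.exp (-(x - c))) = 1 := by
  rw [gum_subst c (fun x => Real.exp (-(x - c) - Real.exp (-(x - c))))]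
  have heq : ∀ t ∈ Ioi (0:ℝ),
      |(-(t⁻¹))| • Real.exp (-((c - Real.log t) - c) - Real.exp (-((c - Real.log t) - c)))
      = Real.exp (-t) := by
    intro t ht
    have ht' : (0:ℝ) < t := ht
    rw [abs_neg, abs_of_pos (inv_pos.mpr ht'), smul_eq_mul]
    have h1 : -((c - Real.log t) - c) = Real.log t := by ring
    rw [h1, Real.exp_sub, Real.exp_log ht', Real.exp_neg]
    have := Real.exp_pos t
    field_simp
  rw [setIntegral_congr_fun measurableSet_Ioi heq, integral_exp_neg_Ioi_zero]

end AuxGumbel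

/-- The standard Gumbel (Type-I extreme value) measure on ℝ: the measure with
density `x ↦ exp (-x - exp (-x))` with respect to Lebesgue measure. -/
noncomputable def gumbelMeasure : Measure ℝ :=
  MeasureTheory.volume.withDensity
    (fun x => ENNReal.ofReal (Real.exp (-x - Real.exp (-x))))

section AuxGumbel2
open Set Real Filter



lemma gumbel_Iic (a : ℝ) :
    gumbelMeasure (Iic a) = ENNReal.ofReal (Real.exp (-Real.exp (-a))) := by
  rw [gumbelMeasure, withDensity_apply _ measurableSet_Iic,
    ← ofReal_integral_eq_lintegral_ofReal gum_integrable.integrableOn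
      (Filter.Eventually.of_forall fun x => (Real.exp_pos _).le),
    gum_integral_Iic]

instance : IsFiniteMeasure gumbelMeasure := by
  constructor
  rw [gumbelMeasure, withDensity_apply _ MeasurableSet.univ, Measure.restrict_univ,
    ← ofReal_integral_eq_lintegral_ofReal gum_integrable
      (Filter.Eventually.of_forall fun x => (Real.exp_pos _).le)]
  exact ENNReal.ofReal_lt_top

lemma gum_shift_integral_Iic (c a : ℝ) :
    ∫ x in Iic a, Real.exp (-(x - c) - Real.exp (-(x - c)))
      = Real.exp (-Real.exp (-(a - c))) := by
  have h : ∀ y : ℝ, (Iic a).indicator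
      (fun x => Real.exp (-(x - c) - Real.exp (-(x - c)))) y
      = (Iic (a - c)).indicator (fun x => Real.exp (-x - Real.exp (-x))) (y - c) := by
    intro y
    by_cases hy : y ≤ a
    · rw [indicator_of_mem (mem_Iic.mpr hy),
        indicator_of_mem (mem_Iic.mpr (by linarith : y - c ≤ a - c))]
    · rw [indicator_of_notMem (fun h => hy (mem_Iic.mp h)),
        indicator_of_notMem (fun h => hy (by have := mem_Iic.mp h; linarith))]
  rw [← integral_indicator measurableSet_Iic]
  simp_rw [h]
  rw [integral_sub_right_eq_self
    (fun y => (Iic (a - c)).indicator (fun x => Real.exp (-x - Real.exp (-x))) y) c,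
    integral_indicator measurableSet_Iic, gum_integral_Iic]

lemma gum_shift_integrable (c : ℝ) :
    Integrable (fun x : ℝ => Real.exp (-(x - c) - Real.exp (-(x - c)))) :=
  gum_integrable.comp_sub_right c

lemma gumbelShift_Iic (c a : ℝ) :
    (volume.withDensity fun x => ENNReal.ofReal (Real.exp (-(x - c) - Real.exp (-(x - c)))))
      (Iic a) = ENNReal.ofReal (Real.exp (-Real.exp (-(a - c)))) := by
  rw [withDensity_apply _ measurableSet_Iic,
    ← ofReal_integral_eq_lintegral_ofReal (gum_shift_integrable c).integrableOn
      (Filter.Eventually.of_forall fun x => (Real.exp_pos _).le),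
    gum_shift_integral_Iic]

end AuxGumbel2

section Main
open Set Real Filter

/-- Arcidiacono–Miller Lemma 1 under Type-I extreme value shocks: the difference
between the integrated value `V` and the choice-specific value `v d` equals
`ψ_d(p) = γ - log (p d)`, a function of the conditional choice probabilities alone. -/


theorem arcidiacono_miller_lemma1_T1EV {D : Type*} [Fintype D] [Nonempty D]
    (v : D → ℝ) (V : ℝ)
    (hV : V = ∫ ε : D → ℝ, (Finset.univ.sup' Finset.univ_nonempty fun d => v d + ε d)
        ∂(Measure.pi fun _ : D => gumbelMeasure))
    (p : D → ℝ)
    (hp : ∀ d : D, p d = Real.exp (v d) / ∑ d' : D, Real.exp (v d')) :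
    ∀ d : D, V = (Real.eulerMascheroniConstant - Real.log (p d)) + v d := by
  classical
  set S : ℝ := ∑ d' : D, Real.exp (v d') with hS
  have hSpos : 0 < S := Finset.sum_pos (fun d _ => Real.exp_pos _) ⟨Classical.arbitrary D,
    Finset.mem_univ _⟩
  set c : ℝ := Real.log S with hc
  set T : (D → ℝ) → ℝ := fun ε => Finset.univ.sup' Finset.univ_nonempty fun d => v d + ε d
    with hT
  have hTmeas : Measurable T := by
    have hTfun : T = Finset.univ.sup' Finset.univ_nonempty
        (fun d (ε : D → ℝ) => v d + ε d) := by
      funext ε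
      rw [Finset.sup'_apply]
    rw [hTfun]
    exact Finset.measurable_sup' Finset.univ_nonempty
      (fun d _ => measurable_const.add (measurable_pi_apply d))
  set mpi : Measure (D → ℝ) := Measure.pi fun _ : D => gumbelMeasure with hmpi
  -- key: V = c + γ
  have hVeq : V = c + Real.eulerMascheroniConstant := by
    have hmap : mpi.map T
        = volume.withDensity fun x => ENNReal.ofReal (Real.exp (-(x - c) - Real.exp (-(x - c)))) := by
      refine MeasureTheory.Measure.ext_of_Iic _ _ fun a => ?_
      rw [Measure.map_apply hTmeas measurableSet_Iic]
      have hpre : T ⁻¹' (Iic a) = Set.pi Set.univ fun d => Iic (a - v d) := by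
        ext ε
        simp only [mem_preimage, mem_Iic, Set.mem_pi, Set.mem_univ, forall_true_left, hT,
          Finset.sup'_le_iff, Finset.mem_univ, forall_true_left]
        constructor
        · intro h d; have := h d; linarith
        · intro h d; have := h d; linarith
      rw [hpre, Measure.pi_pi]
      simp_rw [gumbel_Iic]
      rw [← ENNReal.ofReal_prod_of_nonneg (fun d _ => (Real.exp_pos _).le), gumbelShift_Iic]
      congr 1
      rw [← Real.exp_sum]
      congr 1
      have : ∀ d : D, -Real.exp (-(a - v d)) = -(Real.exp (v d) * Real.exp (-a)) := by
        intro d; rw [← Real.exp_add]; ring_nf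
      rw [Finset.sum_congr rfl fun d _ => this d, Finset.sum_neg_distrib,
        ← Finset.sum_mul]
      have h2 : Real.exp (-(a - c)) = S * Real.exp (-a) := by
        rw [show -(a - c) = c + -a by ring, Real.exp_add, hc, Real.exp_log hSpos]
      rw [h2, hS]
    have h1 : ∫ x, x ∂(mpi.map T) = ∫ ε, T ε ∂mpi :=
      integral_map hTmeas.aemeasurable aestronglyMeasurable_id
    rw [hV, ← h1, hmap]
    have h2 : ∫ x, x ∂(volume.withDensity fun x =>
        ENNReal.ofReal (Real.exp (-(x - c) - Real.exp (-(x - c)))))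
        = ∫ x, x * Real.exp (-(x - c) - Real.exp (-(x - c))) := by
      have hm : Measurable fun x : ℝ => (Real.exp (-(x - c) - Real.exp (-(x - c)))).toNNReal :=
        (gum_cont.comp (continuous_id.sub continuous_const)).measurable.real_toNNReal
      have := integral_withDensity_eq_integral_smul (μ := volume) hm (fun x : ℝ => x)
      simp only [ENNReal.ofReal] at this ⊢
      rw [this]
      congr 1
      ext x
      rw [NNReal.smul_def, smul_eq_mul, Real.coe_toNNReal _ (Real.exp_pos _).le, mul_comm]
    rw [h2, gum_shift_moment]
  intro d
  rw [hVeq, hp d, Real.log_div (Real.exp_ne_zero _) (ne_of_gt hSpos), Real.log_exp]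
  simp only [hc]
  ring

end Main
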